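/- Let G be a free product of abelian groups and for each even s ≥ 2 let Λ = ⋃_{n} E_n where the E_n lie in distinct free factors and each E_n satisfies: whenever ε_j ∈ {0,±1,±2} with ∑|ε_j| ≤ 2s and ∏_{g∈E_n} g^{ε_g} = 1, then all ε_g = 0. Then whenever x_1, ..., x_s ∈ Λ are distinct, y_1, ..., y_s ∈ Λ are distinct, and x_1 x_2^{-1} x_3 ··· x_s^{-1} = y_1 y_2^{-1} ··· y_s^{-1}, it follows that {x_1, x_3, ..., x_{s-1}} = {y_1, y_3, ..., y_{s-1}} and {x_2, x_4, ..., x_s} = {y_2, y_4, ..., y_s}. Consequently Z_s(Λ) ≤ ((s/2)!)^2 ≤ s!. -/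

import Mathlib

open Monoid

section Aux

variable {ι : Type*} (A : ι → Type*) [∀ i, CommGroup (A i)]

/-- cast hom along an equality of indices -/
private def castHomZ {j i : ι} (h : j = i) : A j →* A i := by subst h; exact MonoidHom.id _

open scoped Classical in
noncomputable def projZ (i : ι) : CoprodI A →* A i :=
  CoprodI.lift fun j => if h : j = i then castHomZ A h else 1

@[simp] lemma projZ_of_self (i : ι) (g : A i) : projZ A i (CoprodI.of g) = g := by
  simp [projZ, CoprodI.lift_of, castHomZ]

lemma projZ_of_ne {j i : ι} (h : j ≠ i) (g : A j) : projZ A i (CoprodI.of g) = 1 := by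
  simp [projZ, CoprodI.lift_of, dif_neg h]

end Aux

lemma zpow_sum' {G : Type*} [CommGroup G] {α : Type*} (g : G) (s : Finset α) (f : α → ℤ) :
    g ^ (∑ i ∈ s, f i) = ∏ i ∈ s, g ^ f i := by
  classical
  induction s using Finset.induction with
  | empty => simp
  | @insert _ _ h ih => rw [Finset.sum_insert h, Finset.prod_insert h, zpow_add, ih]

lemma neg_one_pow_abs (n : ℕ) : |(-1 : ℤ) ^ n| = 1 := by
  rw [abs_pow]; simp

set_option maxHeartbeats 1000000 in
lemma key_lemma {ι : Type*} (A : ι → Type*) [∀ i, CommGroup (A i)]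
    (s : ℕ) (hs2 : 2 ≤ s) (E : ∀ i, Set (A i))
    (hdiss : ∀ i, ∀ ε : A i →₀ ℤ, (ε.support : Set (A i)) ⊆ E i →
      (∀ g, |ε g| ≤ 2) → (∑ g ∈ ε.support, |ε g|) ≤ 2 * s →
      (∏ g ∈ ε.support, g ^ ε g) = 1 → ε = 0)
    (x y : Fin s → CoprodI A)
    (hx : ∀ i, x i ∈ ⋃ n, (fun g => CoprodI.of g) '' E n)
    (hy : ∀ i, y i ∈ ⋃ n, (fun g => CoprodI.of g) '' E n)
    (hxinj : Function.Injective x) (hyinj : Function.Injective y)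
    (hprod : (List.ofFn fun i : Fin s => (x i) ^ ((-1 : ℤ) ^ (i : ℕ))).prod =
        (List.ofFn fun i : Fin s => (y i) ^ ((-1 : ℤ) ^ (i : ℕ))).prod) :
    ∀ j : Fin s, ∃ k : Fin s, y k = x j ∧ ((-1 : ℤ) ^ (j : ℕ)) = (-1 : ℤ) ^ (k : ℕ) := by
  classical
  intro j
  simp only [Set.mem_iUnion, Set.mem_image] at hx hy
  obtain ⟨i, g₀, hg₀E, hg₀x⟩ := hx j
  -- 1 ∉ E i
  have hone : (1 : A i) ∉ E i := by
    intro h1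
    have h := hdiss i (Finsupp.single 1 1) ?_ ?_ ?_ ?_
    · exact one_ne_zero (Finsupp.single_eq_zero.mp h)
    · rw [Finsupp.support_single_ne_zero _ one_ne_zero]
      simpa using h1
    · intro g
      rcases eq_or_ne g 1 with rfl | hg
      · simp
      · rw [Finsupp.single_eq_of_ne' (Ne.symm hg)]; norm_num
    · rw [Finsupp.support_single_ne_zero _ one_ne_zero]
      simp; omega
    · rw [Finsupp.support_single_ne_zero _ one_ne_zero]
      simp
  set π : CoprodI A →* A i := projZ A i with hπ
  set u : Fin s → A i := fun j' => π (x j') with hu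
  set v : Fin s → A i := fun j' => π (y j') with hv
  -- structure of u, v
  have hustr : ∀ j', u j' = 1 ∨ (u j' ∈ E i ∧ x j' = CoprodI.of (u j')) := by
    intro j'
    obtain ⟨m, a, haE, hax⟩ := hx j'
    by_cases hmi : m = i
    · subst hmi
      right
      have hval : u j' = a := by simp only [hu]; rw [← hax, hπ]; simp
      rw [hval]; exact ⟨haE, hax.symm⟩
    · left
      simp only [hu]; rw [← hax, hπ]; exact projZ_of_ne A hmi a
  have hvstr : ∀ j', v j' = 1 ∨ (v j' ∈ E i ∧ y j' = CoprodI.of (v j')) := by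
    intro j'
    obtain ⟨m, a, haE, hax⟩ := hy j'
    by_cases hmi : m = i
    · subst hmi
      right
      have hval : v j' = a := by simp only [hv]; rw [← hax, hπ]; simp
      rw [hval]; exact ⟨haE, hax.symm⟩
    · left
      simp only [hv]; rw [← hax, hπ]; exact projZ_of_ne A hmi a
  have huinj : ∀ j₁ j₂, u j₁ ≠ 1 → u j₁ = u j₂ → j₁ = j₂ := by
    intro j₁ j₂ h1 h12
    rcases hustr j₁ with h | ⟨_, hx1⟩; · exact absurd h h1
    rcases hustr j₂ with h | ⟨_, hx2⟩; · exact absurd (h12 ▸ h) h1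
    exact hxinj (by rw [hx1, hx2, h12])
  have hvinj : ∀ j₁ j₂, v j₁ ≠ 1 → v j₁ = v j₂ → j₁ = j₂ := by
    intro j₁ j₂ h1 h12
    rcases hvstr j₁ with h | ⟨_, hx1⟩; · exact absurd h h1
    rcases hvstr j₂ with h | ⟨_, hx2⟩; · exact absurd (h12 ▸ h) h1
    exact hyinj (by rw [hx1, hx2, h12])
  -- signs
  set sgn : Fin s → ℤ := fun j' => (-1 : ℤ) ^ (j' : ℕ) with hsgn
  set X : A i → ℤ := fun g => ∑ j' ∈ Finset.univ.filter (fun j' => u j' = g), sgn j' with hX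
  set Y : A i → ℤ := fun g => ∑ j' ∈ Finset.univ.filter (fun j' => v j' = g), sgn j' with hY
  -- projected product identity
  have hPX : ∏ j', u j' ^ sgn j' = ∏ j', v j' ^ sgn j' := by
    have h := congrArg π hprod
    simpa only [map_list_prod, List.map_ofFn, Function.comp_def, map_zpow,
      List.prod_ofFn] using h
  -- fiberwise regrouping
  have hfib : ∀ w : Fin s → A i, ∏ j', w j' ^ sgn j' =
      ∏ g ∈ Finset.univ.image w, g ^ (∑ j' ∈ Finset.univ.filter (fun j' => w j' = g), sgn j') := by
    intro w
    rw [← Finset.prod_fiberwise_of_maps_to (fun j' _ => Finset.mem_image_of_mem w (Finset.mem_univ j'))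
      (fun j' => w j' ^ sgn j')]
    refine Finset.prod_congr rfl (fun g _ => ?_)
    rw [zpow_sum']
    refine Finset.prod_congr rfl (fun j' hj' => ?_)
    rw [(Finset.mem_filter.mp hj').2]
  -- the finsupp
  set Su : Finset (A i) := Finset.univ.image u with hSu
  set Sv : Finset (A i) := Finset.univ.image v with hSv
  set S : Finset (A i) := (Su ∪ Sv).erase 1 with hS
  set f : A i → ℤ := fun g => if g = 1 then 0 else X g - Y g with hf
  have hXzero : ∀ g ∉ Su, X g = 0 := by
    intro g hg
    simp only [hX]
    rw [Finset.filter_false_of_mem, Finset.sum_empty]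
    intro j' _ hj'
    exact hg (by rw [hSu]; exact hj' ▸ Finset.mem_image_of_mem u (Finset.mem_univ j'))
  have hYzero : ∀ g ∉ Sv, Y g = 0 := by
    intro g hg
    simp only [hY]
    rw [Finset.filter_false_of_mem, Finset.sum_empty]
    intro j' _ hj'
    exact hg (by rw [hSv]; exact hj' ▸ Finset.mem_image_of_mem v (Finset.mem_univ j'))
  have hfS : ∀ g, f g ≠ 0 → g ∈ S := by
    intro g hg
    have hg1 : g ≠ 1 := by intro h; apply hg; simp [hf, h]
    rw [hS]
    refine Finset.mem_erase.mpr ⟨hg1, ?_⟩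
    by_contra hmem
    rw [Finset.mem_union, not_or] at hmem
    apply hg
    simp only [hf, if_neg hg1, hXzero g hmem.1, hYzero g hmem.2, sub_zero]
  set ε : A i →₀ ℤ := Finsupp.onFinset S f hfS with hεdef
  have hεapp : ∀ g, ε g = f g := fun g => rfl
  have hmemstr : ∀ g ∈ S, g ∈ E i := by
    intro g hgS
    have hg1 : g ≠ 1 := (Finset.mem_erase.mp (hS ▸ hgS)).1
    have hg2 := (Finset.mem_erase.mp (hS ▸ hgS)).2
    rcases Finset.mem_union.mp hg2 with hgu | hgv
    · obtain ⟨j', _, hj'⟩ := Finset.mem_image.mp (hSu ▸ hgu)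
      rcases hustr j' with h | ⟨hE, _⟩
      · exact absurd (hj' ▸ h) (Ne.symm (by exact fun hh => hg1 hh.symm))
      · exact hj' ▸ hE
    · obtain ⟨j', _, hj'⟩ := Finset.mem_image.mp (hSv ▸ hgv)
      rcases hvstr j' with h | ⟨hE, _⟩
      · exact absurd (hj' ▸ h) (Ne.symm (by exact fun hh => hg1 hh.symm))
      · exact hj' ▸ hE
  have hsupp : (ε.support : Set (A i)) ⊆ E i := by
    intro g hg
    simp only [Finset.mem_coe, Finsupp.mem_support_iff] at hg
    exact hmemstr g (hfS g (by rwa [← hεapp]))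
  -- abs bounds
  have habsX : ∀ (w : Fin s → A i) g,
      |∑ j' ∈ Finset.univ.filter (fun j' => w j' = g), sgn j'| ≤
        ((Finset.univ.filter (fun j' => w j' = g)).card : ℤ) := by
    intro w g
    refine le_trans (Finset.abs_sum_le_sum_abs _ _) ?_
    have h1 : ∀ j' ∈ Finset.univ.filter (fun j' => w j' = g), |sgn j'| = 1 := by
      intro j' _; simp only [hsgn]; exact neg_one_pow_abs _
    rw [Finset.sum_congr rfl h1, Finset.sum_const, nsmul_eq_mul, mul_one]
  have hcardu : ∀ g, g ≠ 1 → (Finset.univ.filter (fun j' => u j' = g)).card ≤ 1 := by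
    intro g hg1
    refine Finset.card_le_one.mpr (fun a ha b hb => ?_)
    have ha' := (Finset.mem_filter.mp ha).2
    have hb' := (Finset.mem_filter.mp hb).2
    exact huinj a b (ha' ▸ hg1) (by rw [ha', hb'])
  have hcardv : ∀ g, g ≠ 1 → (Finset.univ.filter (fun j' => v j' = g)).card ≤ 1 := by
    intro g hg1
    refine Finset.card_le_one.mpr (fun a ha b hb => ?_)
    have ha' := (Finset.mem_filter.mp ha).2
    have hb' := (Finset.mem_filter.mp hb).2
    exact hvinj a b (ha' ▸ hg1) (by rw [ha', hb'])
  have habs : ∀ g, |ε g| ≤ 2 := by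
    intro g
    rw [hεapp]
    rcases eq_or_ne g 1 with rfl | hg1
    · simp [hf]
    · simp only [hf, if_neg hg1]
      have h1 : |X g| ≤ 1 := le_trans (habsX u g) (by exact_mod_cast hcardu g hg1)
      have h2 : |Y g| ≤ 1 := le_trans (habsX v g) (by exact_mod_cast hcardv g hg1)
      calc |X g - Y g| ≤ |X g| + |Y g| := abs_sub _ _
        _ ≤ 2 := by linarith
  -- sum bound
  have hsum_fib : ∀ (w : Fin s → A i) (T : Finset (A i)),
      ∑ g ∈ T, ((Finset.univ.filter (fun j' => w j' = g)).card : ℤ) ≤ s := by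
    intro w T
    have h1 : ∑ g ∈ T, ((Finset.univ.filter (fun j' => w j' = g)).card : ℤ) ≤
        ∑ g ∈ T ∪ Finset.univ.image w, ((Finset.univ.filter (fun j' => w j' = g)).card : ℤ) :=
      Finset.sum_le_sum_of_subset_of_nonneg Finset.subset_union_left
        (fun g _ _ => Nat.cast_nonneg _)
    have h2 : ∑ g ∈ Finset.univ.image w, ((Finset.univ.filter (fun j' => w j' = g)).card : ℤ) =
        ∑ g ∈ T ∪ Finset.univ.image w, ((Finset.univ.filter (fun j' => w j' = g)).card : ℤ) := by
      refine Finset.sum_subset Finset.subset_union_right (fun g _ hg => ?_)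
      rw [Finset.filter_false_of_mem, Finset.card_empty, Nat.cast_zero]
      intro j' _ hj'
      exact hg (hj' ▸ Finset.mem_image_of_mem w (Finset.mem_univ j'))
    have h3 : (Finset.univ : Finset (Fin s)).card =
        ∑ g ∈ Finset.univ.image w, (Finset.univ.filter (fun j' => w j' = g)).card :=
      Finset.card_eq_sum_card_fiberwise (fun j' _ => Finset.mem_image_of_mem w (Finset.mem_univ j'))
    have h4 : ∑ g ∈ Finset.univ.image w, ((Finset.univ.filter (fun j' => w j' = g)).card : ℤ) = s := by
      rw [← Nat.cast_sum, ← h3, Finset.card_univ, Fintype.card_fin]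
    calc _ ≤ _ := h1
      _ = _ := h2.symm
      _ = (s : ℤ) := h4
  have hsumle : ∑ g ∈ ε.support, |ε g| ≤ 2 * s := by
    have hstep : ∀ g ∈ ε.support, |ε g| ≤ |X g| + |Y g| := by
      intro g hg
      rw [hεapp]
      have hgS : g ∈ S := hfS g (by rwa [← hεapp, ← Finsupp.mem_support_iff])
      have hg1 : g ≠ 1 := (Finset.mem_erase.mp (hS ▸ hgS)).1
      simp only [hf, if_neg hg1]
      exact abs_sub _ _
    calc ∑ g ∈ ε.support, |ε g| ≤ ∑ g ∈ ε.support, (|X g| + |Y g|) :=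
          Finset.sum_le_sum hstep
      _ = ∑ g ∈ ε.support, |X g| + ∑ g ∈ ε.support, |Y g| := Finset.sum_add_distrib
      _ ≤ (s : ℤ) + (s : ℤ) := by
          gcongr
          · exact le_trans (Finset.sum_le_sum fun g _ => habsX u g) (hsum_fib u _)
          · exact le_trans (Finset.sum_le_sum fun g _ => habsX v g) (hsum_fib v _)
      _ = 2 * (s : ℤ) := by ring
  -- product is 1
  have hextend : ∀ (w : Fin s → A i) (Z : A i → ℤ),
      (∀ g ∉ Finset.univ.image w, Z g = 0) → Finset.univ.image w ⊆ Su ∪ Sv →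
      ∏ g ∈ S, g ^ Z g = ∏ g ∈ Finset.univ.image w, g ^ Z g := by
    intro w Z hZ himg
    have e1 : ∏ g ∈ S, g ^ Z g = ∏ g ∈ S ∪ Finset.univ.image w, g ^ Z g := by
      refine Finset.prod_subset Finset.subset_union_left (fun g hg hgS => ?_)
      rcases Finset.mem_union.mp hg with h | h
      · exact absurd h hgS
      · have hg1 : g = 1 := by
          by_contra hg1
          exact hgS (hS ▸ Finset.mem_erase.mpr ⟨hg1, himg h⟩)
        rw [hg1, one_zpow]
    have e2 : ∏ g ∈ S ∪ Finset.univ.image w, g ^ Z g = ∏ g ∈ Finset.univ.image w, g ^ Z g := by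
      refine (Finset.prod_subset Finset.subset_union_right (fun g _ hg => ?_)).symm
      rw [hZ g hg, zpow_zero]
    rw [e1, e2]
  have hSXY : ∏ g ∈ S, g ^ X g = ∏ g ∈ S, g ^ Y g := by
    have eX : ∏ g ∈ S, g ^ X g = ∏ j', u j' ^ sgn j' := by
      rw [hextend u X hXzero (hSu ▸ Finset.subset_union_left), hfib u]
    have eY : ∏ g ∈ S, g ^ Y g = ∏ j', v j' ^ sgn j' := by
      rw [hextend v Y hYzero (hSv ▸ Finset.subset_union_right), hfib v]
    rw [eX, eY, hPX]
  have hprod1 : ∏ g ∈ ε.support, g ^ ε g = 1 := by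
    have hfprod : ∏ g ∈ S, g ^ f g = 1 := by
      have e : ∏ g ∈ S, g ^ f g = ∏ g ∈ S, (g ^ X g * (g ^ Y g)⁻¹) := by
        refine Finset.prod_congr rfl (fun g hg => ?_)
        have hg1 : g ≠ 1 := (Finset.mem_erase.mp (hS ▸ hg)).1
        rw [hf]; simp only [if_neg hg1]
        rw [zpow_sub]
      rw [e, Finset.prod_mul_distrib, Finset.prod_inv_distrib, hSXY, mul_inv_cancel]
    have hsub : ε.support ⊆ S := Finsupp.support_onFinset_subset
    have e2 : ∏ g ∈ ε.support, g ^ ε g = ∏ g ∈ S, g ^ ε g := by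
      refine Finset.prod_subset hsub (fun g _ hg => ?_)
      rw [Finsupp.notMem_support_iff.mp hg, zpow_zero]
    rw [e2]
    rw [← hfprod]
    exact Finset.prod_congr rfl (fun g _ => by rw [hεapp])
  -- apply dissociativity
  have hε0 := hdiss i ε hsupp habs hsumle hprod1
  have hf0 : ∀ g, f g = 0 := by
    intro g
    have := DFunLike.congr_fun hε0 g
    rwa [hεapp g] at this
  -- conclude
  have hg₀1 : g₀ ≠ 1 := fun h => hone (h ▸ hg₀E)
  have huj : u j = g₀ := by simp only [hu]; rw [← hg₀x, hπ]; simp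
  have hfilu : Finset.univ.filter (fun j' => u j' = g₀) = {j} := by
    refine Finset.eq_singleton_iff_unique_mem.mpr ⟨?_, ?_⟩
    · exact Finset.mem_filter.mpr ⟨Finset.mem_univ j, huj⟩
    · intro b hb
      have hb' := (Finset.mem_filter.mp hb).2
      exact huinj b j (hb' ▸ hg₀1) (by rw [hb', huj])
  have hXg₀ : X g₀ = sgn j := by simp only [hX]; rw [hfilu, Finset.sum_singleton]
  have hXY : X g₀ = Y g₀ := by
    have h := hf0 g₀
    simp only [hf, if_neg hg₀1] at h
    linarith
  have hsgnne : ∀ k : Fin s, sgn k ≠ 0 := by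
    intro k
    simp only [hsgn]
    exact pow_ne_zero _ (by norm_num)
  have hYne : Y g₀ ≠ 0 := by rw [← hXY, hXg₀]; exact hsgnne j
  have hkex : ∃ k, v k = g₀ := by
    by_contra h
    push_neg at h
    apply hYne
    simp only [hY]
    rw [Finset.filter_false_of_mem (fun k _ => h k), Finset.sum_empty]
  obtain ⟨k, hk⟩ := hkex
  have hfilv : Finset.univ.filter (fun j' => v j' = g₀) = {k} := by
    refine Finset.eq_singleton_iff_unique_mem.mpr ⟨?_, ?_⟩
    · exact Finset.mem_filter.mpr ⟨Finset.mem_univ k, hk⟩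
    · intro b hb
      have hb' := (Finset.mem_filter.mp hb).2
      exact hvinj b k (hb' ▸ hg₀1) (by rw [hb', hk])
  have hYg₀ : Y g₀ = sgn k := by simp only [hY]; rw [hfilv, Finset.sum_singleton]
  have hyk : y k = x j := by
    rcases hvstr k with h | ⟨_, h⟩
    · exact absurd (hk ▸ h : g₀ = 1) hg₀1
    · rw [h, hk]; exact hg₀x
  exact ⟨k, hyk, by rw [show ((-1:ℤ)^(j:ℕ)) = sgn j from rfl, show ((-1:ℤ)^(k:ℕ)) = sgn k from rfl, ← hXg₀, hXY, hYg₀]⟩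

lemma parity_of_pow_eq {a b : ℕ} (h : ((-1 : ℤ)) ^ a = (-1 : ℤ) ^ b) : Even a ↔ Even b := by
  rcases Nat.even_or_odd a with ha | ha <;> rcases Nat.even_or_odd b with hb | hb
  · simp [ha, hb]
  · rw [ha.neg_one_pow, hb.neg_one_pow] at h; norm_num at h
  · rw [ha.neg_one_pow, hb.neg_one_pow] at h; norm_num at h
  · simp [Nat.even_iff, Nat.odd_iff.mp ha, Nat.odd_iff.mp hb]

def evenFinEquiv (s t : ℕ) (h : s = t + t) : {i : Fin s // Even (i : ℕ)} ≃ Fin t where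
  toFun p := ⟨(p.1 : ℕ) / 2, by
    have h2 := Nat.even_iff.mp p.2
    have h3 := p.1.isLt
    omega⟩
  invFun k := ⟨⟨2 * k.1, by have := k.isLt; omega⟩, by rw [Nat.even_iff]; show (2 * (k:ℕ)) % 2 = 0; omega⟩
  left_inv p := by
    have h2 := Nat.even_iff.mp p.2
    ext
    show 2 * ((p.1 : ℕ) / 2) = (p.1 : ℕ)
    omega
  right_inv k := by
    ext
    show 2 * (k : ℕ) / 2 = (k : ℕ)
    omega

def oddFinEquiv (s t : ℕ) (h : s = t + t) : {i : Fin s // Odd (i : ℕ)} ≃ Fin t where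
  toFun p := ⟨(p.1 : ℕ) / 2, by
    have h2 := Nat.odd_iff.mp p.2
    have h3 := p.1.isLt
    omega⟩
  invFun k := ⟨⟨2 * k.1 + 1, by have := k.isLt; omega⟩, by rw [Nat.odd_iff]; show (2 * (k:ℕ) + 1) % 2 = 1; omega⟩
  left_inv p := by
    have h2 := Nat.odd_iff.mp p.2
    ext
    show 2 * ((p.1 : ℕ) / 2) + 1 = (p.1 : ℕ)
    omega
  right_inv k := by
    ext
    show (2 * (k : ℕ) + 1) / 2 = (k : ℕ)
    omega

theorem free_product_Zs_bound {ι : Type*} (A : ι → Type*) [∀ i, CommGroup (A i)]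
    (s : ℕ) (hs : Even s) (hs2 : 2 ≤ s)
    (E : ∀ i, Set (A i))
    (hdiss : ∀ i, ∀ ε : A i →₀ ℤ, (ε.support : Set (A i)) ⊆ E i →
      (∀ g, |ε g| ≤ 2) → (∑ g ∈ ε.support, |ε g|) ≤ 2 * s →
      (∏ g ∈ ε.support, g ^ ε g) = 1 → ε = 0) :
    (∀ x y : Fin s → CoprodI A,
      (∀ i, x i ∈ ⋃ n, (fun g => CoprodI.of g) '' E n) →
      (∀ i, y i ∈ ⋃ n, (fun g => CoprodI.of g) '' E n) →
      Function.Injective x → Function.Injective y →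
      (List.ofFn fun i : Fin s => (x i) ^ ((-1 : ℤ) ^ (i : ℕ))).prod =
        (List.ofFn fun i : Fin s => (y i) ^ ((-1 : ℤ) ^ (i : ℕ))).prod →
      ({g | ∃ i : Fin s, Even (i : ℕ) ∧ x i = g} = {g | ∃ i : Fin s, Even (i : ℕ) ∧ y i = g} ∧
       {g | ∃ i : Fin s, Odd (i : ℕ) ∧ x i = g} = {g | ∃ i : Fin s, Odd (i : ℕ) ∧ y i = g})) ∧
    (∀ w : CoprodI A,
      Set.ncard {x : Fin s → CoprodI A |
        (∀ i, x i ∈ ⋃ n, (fun g => CoprodI.of g) '' E n) ∧ Function.Injective x ∧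
        (List.ofFn fun i : Fin s => (x i) ^ ((-1 : ℤ) ^ (i : ℕ))).prod = w} ≤
        Nat.factorial (s / 2) ^ 2) ∧
    Nat.factorial (s / 2) ^ 2 ≤ Nat.factorial s := by
  classical
  obtain ⟨t, hst⟩ := hs
  have hst2 : s / 2 = t := by omega
  have main : ∀ x y : Fin s → CoprodI A,
      (∀ i, x i ∈ ⋃ n, (fun g => CoprodI.of g) '' E n) →
      (∀ i, y i ∈ ⋃ n, (fun g => CoprodI.of g) '' E n) →
      Function.Injective x → Function.Injective y →
      (List.ofFn fun i : Fin s => (x i) ^ ((-1 : ℤ) ^ (i : ℕ))).prod =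
        (List.ofFn fun i : Fin s => (y i) ^ ((-1 : ℤ) ^ (i : ℕ))).prod →
      ({g | ∃ i : Fin s, Even (i : ℕ) ∧ x i = g} = {g | ∃ i : Fin s, Even (i : ℕ) ∧ y i = g} ∧
       {g | ∃ i : Fin s, Odd (i : ℕ) ∧ x i = g} = {g | ∃ i : Fin s, Odd (i : ℕ) ∧ y i = g}) := by
    intro x y hx hy hxi hyi hp
    have h1 := key_lemma A s hs2 E hdiss x y hx hy hxi hyi hp
    have h2 := key_lemma A s hs2 E hdiss y x hy hx hyi hxi hp.symm
    constructor
    · ext g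
      simp only [Set.mem_setOf_eq]
      constructor
      · rintro ⟨j, hje, rfl⟩
        obtain ⟨k, hk, hsg⟩ := h1 j
        exact ⟨k, (parity_of_pow_eq hsg).mp hje, hk⟩
      · rintro ⟨j, hje, rfl⟩
        obtain ⟨k, hk, hsg⟩ := h2 j
        exact ⟨k, (parity_of_pow_eq hsg).mp hje, hk⟩
    · ext g
      simp only [Set.mem_setOf_eq]
      constructor
      · rintro ⟨j, hje, rfl⟩
        obtain ⟨k, hk, hsg⟩ := h1 j
        refine ⟨k, ?_, hk⟩
        rw [← Nat.not_even_iff_odd] at hje ⊢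
        exact fun he => hje ((parity_of_pow_eq hsg).mpr he)
      · rintro ⟨j, hje, rfl⟩
        obtain ⟨k, hk, hsg⟩ := h2 j
        refine ⟨k, ?_, hk⟩
        rw [← Nat.not_even_iff_odd] at hje ⊢
        exact fun he => hje ((parity_of_pow_eq hsg).mpr he)
  refine ⟨main, ?_, ?_⟩
  · -- counting
    intro w
    set T : Set (Fin s → CoprodI A) := {x : Fin s → CoprodI A |
        (∀ i, x i ∈ ⋃ n, (fun g => CoprodI.of g) '' E n) ∧ Function.Injective x ∧
        (List.ofFn fun i : Fin s => (x i) ^ ((-1 : ℤ) ^ (i : ℕ))).prod = w} with hT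
    rcases T.eq_empty_or_nonempty with he | ⟨x₀, hx₀⟩
    · rw [he]; simp
    · obtain ⟨h₀mem, h₀inj, h₀prod⟩ := hx₀
      have hkey : ∀ x, x ∈ T →
          (∀ p : {i : Fin s // Even (i : ℕ)}, ∃ q : {i : Fin s // Even (i : ℕ)},
            x₀ q.1 = x p.1) ∧
          (∀ p : {i : Fin s // Odd (i : ℕ)}, ∃ q : {i : Fin s // Odd (i : ℕ)},
            x₀ q.1 = x p.1) := by
        intro x hx
        obtain ⟨hmem, hinj, hpr⟩ := hx
        have hm := main x x₀ hmem h₀mem hinj h₀inj (hpr.trans h₀prod.symm)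
        constructor
        · intro p
          have hmm : x p.1 ∈ {g | ∃ i : Fin s, Even (i : ℕ) ∧ x₀ i = g} := by
            rw [← hm.1]; exact ⟨p.1, p.2, rfl⟩
          obtain ⟨k, hk, hkx⟩ := hmm
          exact ⟨⟨k, hk⟩, hkx⟩
        · intro p
          have hmm : x p.1 ∈ {g | ∃ i : Fin s, Odd (i : ℕ) ∧ x₀ i = g} := by
            rw [← hm.2]; exact ⟨p.1, p.2, rfl⟩
          obtain ⟨k, hk, hkx⟩ := hmm
          exact ⟨⟨k, hk⟩, hkx⟩
      -- build the injection
      have hFdef : ∀ x : T, ∃ F : ({i : Fin s // Even (i : ℕ)} ↪ {i : Fin s // Even (i : ℕ)}) × ({i : Fin s // Odd (i : ℕ)} ↪ {i : Fin s // Odd (i : ℕ)}),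
          (∀ p : {i : Fin s // Even (i : ℕ)}, x₀ (F.1 p).1 = x.1 p.1) ∧ (∀ p : {i : Fin s // Odd (i : ℕ)}, x₀ (F.2 p).1 = x.1 p.1) := by
        rintro ⟨x, hx⟩
        have hk := hkey x hx
        obtain ⟨hmem, hinj, hpr⟩ := hx
        refine ⟨⟨⟨fun p => Classical.choose (hk.1 p), ?_⟩, ⟨fun p => Classical.choose (hk.2 p), ?_⟩⟩,
          fun p => Classical.choose_spec (hk.1 p), fun p => Classical.choose_spec (hk.2 p)⟩
        · intro p p' hpp
          have hpp' : Classical.choose (hk.1 p) = Classical.choose (hk.1 p') := hpp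
          have s1 := Classical.choose_spec (hk.1 p)
          have s2 := Classical.choose_spec (hk.1 p')
          rw [hpp'] at s1
          exact Subtype.ext (hinj (s1.symm.trans s2))
        · intro p p' hpp
          have hpp' : Classical.choose (hk.2 p) = Classical.choose (hk.2 p') := hpp
          have s1 := Classical.choose_spec (hk.2 p)
          have s2 := Classical.choose_spec (hk.2 p')
          rw [hpp'] at s1
          exact Subtype.ext (hinj (s1.symm.trans s2))
      choose F hF1 hF2 using hFdef
      have hFinj : Function.Injective F := by
        intro a b hab
        apply Subtype.ext
        funext i
        rcases Nat.even_or_odd (i : ℕ) with hi | hi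
        · have e1 := hF1 a ⟨i, hi⟩
          have e2 := hF1 b ⟨i, hi⟩
          rw [hab] at e1
          exact (e1.symm.trans e2)
        · have e1 := hF2 a ⟨i, hi⟩
          have e2 := hF2 b ⟨i, hi⟩
          rw [hab] at e1
          exact (e1.symm.trans e2)
      have hcardEv : Fintype.card {i : Fin s // Even (i : ℕ)} = t := by
        rw [Fintype.card_congr (evenFinEquiv s t hst), Fintype.card_fin]
      have hcardOd : Fintype.card {i : Fin s // Odd (i : ℕ)} = t := by
        rw [Fintype.card_congr (oddFinEquiv s t hst), Fintype.card_fin]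
      calc T.ncard = Nat.card T := (Nat.card_coe_set_eq T).symm
        _ ≤ Nat.card (({i : Fin s // Even (i : ℕ)} ↪ {i : Fin s // Even (i : ℕ)}) × ({i : Fin s // Odd (i : ℕ)} ↪ {i : Fin s // Odd (i : ℕ)})) := Nat.card_le_card_of_injective F hFinj
        _ = Nat.factorial (s / 2) ^ 2 := by
            rw [Nat.card_prod, Nat.card_eq_fintype_card, Nat.card_eq_fintype_card,
              Fintype.card_embedding_eq, Fintype.card_embedding_eq, hcardEv, hcardOd,
              Nat.descFactorial_self, hst2, sq]
  · -- factorial inequality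
    have hd := Nat.factorial_mul_factorial_dvd_factorial_add t t
    calc Nat.factorial (s / 2) ^ 2 = Nat.factorial t * Nat.factorial t := by rw [hst2, sq]
      _ ≤ Nat.factorial (t + t) := Nat.le_of_dvd (Nat.factorial_pos _) hd
      _ = Nat.factorial s := by rw [← hst]
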